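/- Let d ≥ 2, let O ⊆ ℝ^d be open, and let D ⊆ ∂O be (d−1)-regular. Suppose O satisfies the uniform Lipschitz condition around the closed set cl(∂O \ D). Then the full boundary ∂O is (d−1)-regular. -/

import Mathlib

open MeasureTheory Metric
open scoped ENNReal NNReal

/-- The open unit cube `(-1,1)^d`. -/
def unitCube (d : ℕ) : Set (EuclideanSpace ℝ (Fin d)) :=
  {y | ∀ i, |y i| < 1}

/-- The lower half `(-1,0) × (-1,1)^(d-1)` of the unit cube. -/
def lowerHalfCube (d : ℕ) [NeZero d] : Set (EuclideanSpace ℝ (Fin d)) :=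
  {y | -1 < y 0 ∧ y 0 < 0 ∧ ∀ i, i ≠ 0 → |y i| < 1}

/-- The central face `{0} × (-1,1)^(d-1)` of the unit cube. -/
def cubeFace (d : ℕ) [NeZero d] : Set (EuclideanSpace ℝ (Fin d)) :=
  {y | y 0 = 0 ∧ ∀ i, i ≠ 0 → |y i| < 1}

section Auxiliary

open Set
open scoped ENNReal NNReal

noncomputable section



lemma coord_le_dist {d : ℕ} (y z : EuclideanSpace ℝ (Fin d)) (i : Fin d) :
    |y i - z i| ≤ dist y z := by
  rw [EuclideanSpace.dist_eq]
  rw [show |y i - z i| = Real.sqrt ((y i - z i)^2) from (Real.sqrt_sq_eq_abs _).symm]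
  apply Real.sqrt_le_sqrt
  have := Finset.single_le_sum (f := fun j => dist (y j) (z j)^2) (fun j _ => sq_nonneg _)
    (Finset.mem_univ i)
  simpa [Real.dist_eq] using this

/-- index embedding Fin (d-1) → Fin d avoiding 0 -/
def emb2 (d : ℕ) (i : Fin (d-1)) : Fin d := ⟨i.1 + 1, by omega⟩

def projH (d : ℕ) (y : EuclideanSpace ℝ (Fin d)) : Fin (d-1) → ℝ := fun i => y (emb2 d i)

def jmapH (d : ℕ) (z : Fin (d-1) → ℝ) : EuclideanSpace ℝ (Fin d) :=
  WithLp.toLp 2 (fun j : Fin d => if h : j.1 = 0 then 0 else z ⟨j.1 - 1, by omega⟩)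

lemma projH_jmapH (d : ℕ) (z : Fin (d-1) → ℝ) : projH d (jmapH d z) = z := by
  funext i
  simp only [projH, jmapH, emb2]
  norm_num

lemma jmapH_projH (d : ℕ) [NeZero d] (y : EuclideanSpace ℝ (Fin d)) (hy : y 0 = 0) :
    jmapH d (projH d y) = y := by
  ext j
  simp only [projH, jmapH, emb2, PiLp.toLp_apply]
  split_ifs with h
  · rw [show j = (0 : Fin d) from by ext; simpa using h]
    exact hy.symm
  · exact congrArg y.ofLp (Fin.ext (by simp; omega))

lemma jmapH_zero (d : ℕ) : jmapH d (0 : Fin (d-1) → ℝ) = 0 := by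
  ext j
  simp only [jmapH, PiLp.toLp_apply]
  split_ifs <;> rfl

lemma jmapH_coord_zero (d : ℕ) [NeZero d] (z : Fin (d-1) → ℝ) : jmapH d z 0 = 0 := by
  simp [jmapH]

lemma lipschitz_projH (d : ℕ) : LipschitzWith 1 (projH d) := by
  apply LipschitzWith.of_dist_le_mul
  intro y z
  rw [NNReal.coe_one, one_mul]
  refine (dist_pi_le_iff dist_nonneg).2 fun i => ?_
  have := coord_le_dist y z (emb2 d i)
  simpa [projH, Real.dist_eq] using this

lemma dist_jmapH_le (d : ℕ) (z w : Fin (d-1) → ℝ) :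
    dist (jmapH d z) (jmapH d w) ≤ Real.sqrt d * dist z w := by
  rw [EuclideanSpace.dist_eq]
  have hbound : ∀ j : Fin d, dist (jmapH d z j) (jmapH d w j) ^ 2 ≤ dist z w ^ 2 := by
    intro j
    have h1 : dist (jmapH d z j) (jmapH d w j) ≤ dist z w := by
      simp only [jmapH, PiLp.toLp_apply]
      split_ifs with hj
      · simp [dist_nonneg]
      · exact dist_le_pi_dist z w _
    exact pow_le_pow_left₀ dist_nonneg h1 2
  calc Real.sqrt (∑ j, dist (jmapH d z j) (jmapH d w j) ^ 2)
      ≤ Real.sqrt (∑ _j : Fin d, dist z w ^ 2) :=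
        Real.sqrt_le_sqrt (Finset.sum_le_sum fun j _ => hbound j)
    _ = Real.sqrt d * dist z w := by
        rw [Finset.sum_const, Finset.card_univ, Fintype.card_fin, nsmul_eq_mul,
          Real.sqrt_mul (by positivity), Real.sqrt_sq dist_nonneg]


lemma lipschitz_jmapH (d : ℕ) : LipschitzWith (Real.sqrt d).toNNReal (jmapH d) :=
  LipschitzWith.of_dist_le_mul fun z w => by
    rw [Real.coe_toNNReal _ (Real.sqrt_nonneg _)]
    exact dist_jmapH_le d z w

lemma projH_def (d : ℕ) (y : EuclideanSpace ℝ (Fin d)) (i : Fin (d-1)) :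
    projH d y i = y (emb2 d i) := rfl

lemma jmapH_apply_ne (d : ℕ) [NeZero d] (z : Fin (d-1) → ℝ) (j : Fin d) (hj : j ≠ 0) :
    ∃ i : Fin (d-1), jmapH d z j = z i ∧ emb2 d i = j := by
  have hj0 : j.1 ≠ 0 := by
    intro h
    apply hj
    ext
    simpa using h
  have hjlt : j.1 < d := j.2
  refine ⟨⟨j.1 - 1, by omega⟩, ?_, ?_⟩
  · simp only [jmapH, PiLp.toLp_apply]
    rw [dif_neg hj0]
  · simp only [emb2]
    ext
    simp
    omega

lemma cast_pred (d : ℕ) (hd : 1 ≤ d) : ((d - 1 : ℕ) : ℝ) = (d : ℝ) - 1 := by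
  have := Nat.cast_sub (R := ℝ) hd
  simpa using this

lemma hausdorff_pi_eq (d : ℕ) (hd : 1 ≤ d) :
    (μH[(d:ℝ)-1] : Measure (Fin (d-1) → ℝ)) = volume := by
  have h := hausdorffMeasure_pi_real (ι := Fin (d-1))
  rw [Fintype.card_fin] at h
  rw [← cast_pred d hd]
  exact h

lemma measH_le (d : ℕ) [NeZero d] (hd : 1 ≤ d) (A : Set (EuclideanSpace ℝ (Fin d)))
    (hA : ∀ y ∈ A, y 0 = 0) :
    μH[(d:ℝ)-1] A ≤ ((Real.sqrt d).toNNReal : ℝ≥0∞) ^ ((d:ℝ)-1) * volume (projH d '' A) := by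
  have hd0 : (0:ℝ) ≤ (d:ℝ) - 1 := by
    have : (1:ℝ) ≤ d := by exact_mod_cast hd
    linarith
  have him : jmapH d '' (projH d '' A) = A := by
    rw [← Set.image_comp]
    apply Set.EqOn.image_eq_self
    intro y hy
    exact jmapH_projH d y (hA y hy)
  calc μH[(d:ℝ)-1] A = μH[(d:ℝ)-1] (jmapH d '' (projH d '' A)) := by rw [him]
    _ ≤ ((Real.sqrt d).toNNReal : ℝ≥0∞) ^ ((d:ℝ)-1) * μH[(d:ℝ)-1] (projH d '' A) :=
        (lipschitz_jmapH d).hausdorffMeasure_image_le hd0 _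
    _ = _ := by rw [hausdorff_pi_eq d hd]

lemma volume_le_measH (d : ℕ) [NeZero d] (hd : 1 ≤ d) (A : Set (EuclideanSpace ℝ (Fin d))) :
    volume (projH d '' A) ≤ μH[(d:ℝ)-1] A := by
  have hd0 : (0:ℝ) ≤ (d:ℝ) - 1 := by
    have : (1:ℝ) ≤ d := by exact_mod_cast hd
    linarith
  have := (lipschitz_projH d).hausdorffMeasure_image_le hd0 A
  rwa [hausdorff_pi_eq d hd, ENNReal.coe_one, ENNReal.one_rpow, one_mul] at this


lemma volume_box (d : ℕ) (s : ℝ) :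
    volume {z : Fin (d-1) → ℝ | ∀ i, |z i| < s} = (ENNReal.ofReal (2*s)) ^ (d-1 : ℕ) := by
  have : {z : Fin (d-1) → ℝ | ∀ i, |z i| < s} = Set.pi Set.univ (fun _ => Set.Ioo (-s) s) := by
    ext z
    simp [abs_lt, Set.mem_pi, and_comm]
  rw [this, volume_pi_pi]
  norm_num [Real.volume_Ioo, two_mul]

lemma faceUpper (d : ℕ) [NeZero d] (hd : 1 ≤ d) (s : ℝ) (hs : 0 < s) :
    μH[(d:ℝ)-1] (cubeFace d ∩ ball 0 s) ≤
      ENNReal.ofReal ((Real.sqrt d * (2*s)) ^ ((d:ℝ)-1)) := by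
  have hd0 : (0:ℝ) ≤ (d:ℝ) - 1 := by
    have h1 : (1:ℝ) ≤ d := by exact_mod_cast hd
    linarith
  have key := measH_le d hd (cubeFace d ∩ ball 0 s) (fun y hy => hy.1.1)
  have hsub : projH d '' (cubeFace d ∩ ball 0 s) ⊆ {z : Fin (d-1) → ℝ | ∀ i, |z i| < s} := by
    rintro z ⟨y, hy, rfl⟩
    intro i
    rw [projH_def]
    have h2 := coord_le_dist y 0 (emb2 d i)
    have h3 : dist y 0 < s := mem_ball.1 hy.2
    simp only [show (0 : EuclideanSpace ℝ (Fin d)) (emb2 d i) = 0 from rfl, sub_zero] at h2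
    linarith
  have hv : volume (projH d '' (cubeFace d ∩ ball 0 s)) ≤ (ENNReal.ofReal (2*s)) ^ (d-1 : ℕ) := by
    rw [← volume_box d s]
    exact measure_mono hsub
  calc μH[(d:ℝ)-1] (cubeFace d ∩ ball 0 s)
      ≤ ((Real.sqrt d).toNNReal : ℝ≥0∞) ^ ((d:ℝ)-1) * ((ENNReal.ofReal (2*s)) ^ (d-1 : ℕ)) :=
        key.trans (mul_le_mul_right hv _)
    _ = ENNReal.ofReal ((Real.sqrt d * (2*s)) ^ ((d:ℝ)-1)) := by
        rw [← ENNReal.rpow_natCast (ENNReal.ofReal (2*s)) (d-1), Nat.cast_sub hd, Nat.cast_one]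
        rw [show ((Real.sqrt d).toNNReal : ℝ≥0∞) = ENNReal.ofReal (Real.sqrt d) from rfl]
        rw [← ENNReal.mul_rpow_of_nonneg _ _ hd0]
        rw [← ENNReal.ofReal_mul (Real.sqrt_nonneg _)]
        rw [ENNReal.ofReal_rpow_of_pos (by positivity)]


lemma faceLower (d : ℕ) [NeZero d] (hd : 2 ≤ d) (s : ℝ) (hs : 0 < s) (hs1 : s ≤ 1) :
    ENNReal.ofReal ((2*s/Real.sqrt d) ^ ((d:ℝ)-1)) ≤ μH[(d:ℝ)-1] (cubeFace d ∩ ball 0 s) := by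
  have hd1 : 1 ≤ d := le_trans one_le_two hd
  have hsd : (1:ℝ) ≤ Real.sqrt d := by
    rw [show (1:ℝ) = Real.sqrt 1 by simp]
    exact Real.sqrt_le_sqrt (by exact_mod_cast hd1)
  have hsd0 : (0:ℝ) < Real.sqrt d := lt_of_lt_of_le one_pos hsd
  have hbox : {z : Fin (d-1) → ℝ | ∀ i, |z i| < s / Real.sqrt d} ⊆
      projH d '' (cubeFace d ∩ ball 0 s) := by
    intro z hz
    refine ⟨jmapH d z, ⟨⟨jmapH_coord_zero d z, ?_⟩, ?_⟩, projH_jmapH d z⟩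
    · intro j hj
      obtain ⟨i, hi, -⟩ := jmapH_apply_ne d z j hj
      rw [hi]
      calc |z i| < s / Real.sqrt d := hz i
        _ ≤ s := by
          rw [div_le_iff₀ hsd0]
          nlinarith
        _ ≤ 1 := hs1
    · rw [mem_ball]
      have h1 : dist (jmapH d z) 0 ≤ Real.sqrt d * dist z 0 := by
        have := dist_jmapH_le d z 0
        rwa [jmapH_zero d] at this
      have h2 : dist z 0 < s / Real.sqrt d := by
        rw [dist_pi_lt_iff (by positivity)]
        intro i
        simpa [Real.dist_eq] using hz i
      calc dist (jmapH d z) 0 ≤ Real.sqrt d * dist z 0 := h1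
        _ < Real.sqrt d * (s / Real.sqrt d) := by
            exact mul_lt_mul_of_pos_left h2 hsd0
        _ = s := by field_simp
  have hv : (ENNReal.ofReal (2*(s/Real.sqrt d))) ^ (d-1 : ℕ) ≤
      volume (projH d '' (cubeFace d ∩ ball 0 s)) := by
    rw [← volume_box d (s / Real.sqrt d)]
    exact measure_mono hbox
  have hconv : (ENNReal.ofReal (2*(s/Real.sqrt d))) ^ (d-1 : ℕ) =
      ENNReal.ofReal ((2*s/Real.sqrt d) ^ ((d:ℝ)-1)) := by
    rw [← ENNReal.rpow_natCast (ENNReal.ofReal _) (d-1), Nat.cast_sub hd1, Nat.cast_one]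
    rw [ENNReal.ofReal_rpow_of_pos (by positivity)]
    ring_nf
  calc ENNReal.ofReal ((2*s/Real.sqrt d) ^ ((d:ℝ)-1)) =
        (ENNReal.ofReal (2*(s/Real.sqrt d))) ^ (d-1 : ℕ) := hconv.symm
    _ ≤ volume (projH d '' (cubeFace d ∩ ball 0 s)) := hv
    _ ≤ μH[(d:ℝ)-1] (cubeFace d ∩ ball 0 s) := volume_le_measH d hd1 _


lemma closedBall_subset_unitCube {d : ℕ} : closedBall (0:EuclideanSpace ℝ (Fin d)) (1/2) ⊆ unitCube d := by
  intro y hy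
  intro i
  have h1 := coord_le_dist y 0 i
  simp only [show (0:EuclideanSpace ℝ (Fin d)) i = 0 from rfl, sub_zero] at h1
  have h2 : dist y 0 ≤ 1/2 := mem_closedBall.1 hy
  linarith

lemma ball_subset_chart {d : ℕ} (U : Set (EuclideanSpace ℝ (Fin d)))
    (Φ : EuclideanSpace ℝ (Fin d) → EuclideanSpace ℝ (Fin d))
    (x : EuclideanSpace ℝ (Fin d)) (L' : ℝ≥0) (hL : 1 ≤ L')
    (hU : IsOpen U) (hx : x ∈ U) (hΦx : Φ x = 0) (hbij : Set.BijOn Φ U (unitCube d))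
    (hlip : LipschitzOnWith L' Φ U)
    (hinv2 : ∀ y ∈ U, ∀ z ∈ U, dist y z ≤ (L':ℝ) * dist (Φ y) (Φ z)) :
    ball x (1/(2*(L':ℝ))) ⊆ U := by
  have hL0 : (0:ℝ) < L' := lt_of_lt_of_le one_pos hL
  set ψ := Function.invFunOn Φ U with hψ
  have hinvOn : Set.InvOn ψ Φ U (unitCube d) := hbij.invOn_invFunOn
  have hmaps : Set.MapsTo ψ (unitCube d) U := hbij.surjOn.mapsTo_invFunOn
  have hψlip : LipschitzOnWith L' ψ (unitCube d) := by
    apply LipschitzOnWith.of_dist_le_mul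
    intro u hu v hv
    have h1 := hinv2 (ψ u) (hmaps hu) (ψ v) (hmaps hv)
    rwa [hinvOn.2 hu, hinvOn.2 hv] at h1
  have hKcomp : IsCompact (ψ '' closedBall 0 (1/2)) :=
    (isCompact_closedBall _ _).image_of_continuousOn
      ((hψlip.mono closedBall_subset_unitCube).continuousOn)
  have hKU : ψ '' closedBall 0 (1/2) ⊆ U :=
    (hmaps.mono_left closedBall_subset_unitCube).image_subset
  intro z hz
  have hzx : dist z x < 1/(2*(L':ℝ)) := mem_ball.1 hz
  set p : ℝ → EuclideanSpace ℝ (Fin d) := fun t => x + t • (z - x) with hp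
  have hpcont : Continuous p := by continuity
  have hp0 : p 0 = x := by simp [hp]
  have hp1 : p 1 = z := by simp [hp]
  have hpdist : ∀ t ∈ Icc (0:ℝ) 1, dist (p t) x < 1/(2*(L':ℝ)) := by
    intro t ht
    have heq : dist (p t) x = |t| * dist z x := by
      simp [hp, dist_eq_norm, norm_smul]
    rw [heq]
    calc |t| * dist z x ≤ 1 * dist z x := by
          apply mul_le_mul_of_nonneg_right _ dist_nonneg
          rw [abs_le]; constructor <;> linarith [ht.1, ht.2]
      _ < 1/(2*(L':ℝ)) := by rwa [one_mul]
  -- key: any point on the segment inside U lies in the compact set K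
  have hkey : ∀ t ∈ Icc (0:ℝ) 1, p t ∈ U → p t ∈ ψ '' closedBall 0 (1/2) := by
    intro t ht htU
    have h1 : dist (Φ (p t)) 0 ≤ 1/2 := by
      rw [← hΦx]
      calc dist (Φ (p t)) (Φ x) ≤ L' * dist (p t) x := hlip.dist_le_mul _ htU _ hx
        _ ≤ L' * (1/(2*(L':ℝ))) := by
            apply mul_le_mul_of_nonneg_left (le_of_lt (hpdist t ht)) (le_of_lt hL0)
        _ = 1/2 := by field_simp
    refine ⟨Φ (p t), mem_closedBall.2 h1, hinvOn.1 htU⟩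
  set T : Set ℝ := {t | t ∈ Icc (0:ℝ) 1 ∧ p t ∈ U} with hT
  have hT0 : (0:ℝ) ∈ T := ⟨⟨le_refl 0, zero_le_one⟩, by rwa [hp0]⟩
  have hTne : T.Nonempty := ⟨0, hT0⟩
  have hTbdd : BddAbove T := ⟨1, fun t ht => ht.1.2⟩
  set t₀ := sSup T with ht₀
  have ht₀mem : t₀ ∈ Icc (0:ℝ) 1 := ⟨le_csSup hTbdd hT0, csSup_le hTne fun t ht => ht.1.2⟩
  have ht₀cl : t₀ ∈ closure T := csSup_mem_closure hTne hTbdd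
  have hpt₀K : p t₀ ∈ ψ '' closedBall 0 (1/2) := by
    have h1 : p t₀ ∈ closure (p '' T) := by
      apply image_closure_subset_closure_image hpcont
      exact mem_image_of_mem p ht₀cl
    have h2 : p '' T ⊆ ψ '' closedBall 0 (1/2) := by
      rintro _ ⟨t, ht, rfl⟩
      exact hkey t ht.1 ht.2
    have h3 : closure (p '' T) ⊆ ψ '' closedBall 0 (1/2) :=
      closure_minimal h2 hKcomp.isClosed
    exact h3 h1
  have hpt₀U : p t₀ ∈ U := hKU hpt₀K
  -- now t₀ must be 1
  have ht₀1 : t₀ = 1 := by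
    by_contra hne
    have hlt : t₀ < 1 := lt_of_le_of_ne ht₀mem.2 hne
    have hopen : IsOpen (p ⁻¹' U) := hU.preimage hpcont
    have hmem : t₀ ∈ p ⁻¹' U := hpt₀U
    obtain ⟨ε, hε, hball⟩ := Metric.isOpen_iff.1 hopen t₀ hmem
    set t₁ := min 1 (t₀ + ε/2) with ht₁
    have h5 : t₁ ∈ T := by
      constructor
      · exact ⟨le_trans ht₀mem.1 (le_min hlt.le (by linarith)), min_le_left _ _⟩
      · apply hball
        rw [mem_ball, Real.dist_eq, abs_lt]
        constructor
        · have : t₀ ≤ t₁ := le_min hlt.le (by linarith)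
          linarith [min_le_right (1:ℝ) (t₀ + ε/2)]
        · calc t₁ - t₀ ≤ (t₀ + ε/2) - t₀ := by linarith [min_le_right (1:ℝ) (t₀ + ε/2)]
            _ = ε/2 := by ring
            _ < ε := by linarith
    have h6 : t₁ ≤ t₀ := le_csSup hTbdd h5
    have h7 : t₀ < t₁ := lt_min hlt (by linarith)
    linarith
  rw [← hp1, ← ht₀1]
  exact hpt₀U



lemma cubeFace_subset_unitCube (d : ℕ) [NeZero d] : cubeFace d ⊆ unitCube d := by
  rintro y ⟨h0, h⟩ i
  by_cases hi : i = 0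
  · rw [hi, h0]; norm_num
  · exact h i hi

lemma chart_upper {d : ℕ} [NeZero d] (hd : 2 ≤ d) (O U : Set (EuclideanSpace ℝ (Fin d)))
    (Φ : EuclideanSpace ℝ (Fin d) → EuclideanSpace ℝ (Fin d))
    (y : EuclideanSpace ℝ (Fin d)) (L' : ℝ≥0) (hL : 1 ≤ L')
    (hU : IsOpen U) (hyU : y ∈ U) (hΦy : Φ y = 0) (hbij : Set.BijOn Φ U (unitCube d))
    (hlip : LipschitzOnWith L' Φ U)
    (hinv2 : ∀ u ∈ U, ∀ v ∈ U, dist u v ≤ (L':ℝ) * dist (Φ u) (Φ v))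
    (himg : Φ '' (U ∩ frontier O) = cubeFace d)
    (t : ℝ) (ht : 0 < t) (ht2 : t ≤ 1/(2*(L':ℝ))) :
    μH[(d:ℝ)-1] (ball y t ∩ frontier O) ≤
      ENNReal.ofReal ((2*Real.sqrt d*(L':ℝ)^2)^((d:ℝ)-1) * t^((d:ℝ)-1)) := by
  have hd1 : 1 ≤ d := le_trans one_le_two hd
  have hd0 : (0:ℝ) ≤ (d:ℝ)-1 := by
    have : (1:ℝ) ≤ d := by exact_mod_cast hd1
    linarith
  have hL0 : (0:ℝ) < L' := lt_of_lt_of_le one_pos hL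
  have hsd0 : (0:ℝ) < Real.sqrt d := Real.sqrt_pos.2 (by positivity)
  have hball := ball_subset_chart U Φ y L' hL hU hyU hΦy hbij hlip hinv2
  have hSU : ball y t ∩ frontier O ⊆ U ∩ frontier O := fun w hw =>
    ⟨hball (ball_subset_ball ht2 hw.1), hw.2⟩
  set ψ := Function.invFunOn Φ U with hψ
  have hinvOn : Set.InvOn ψ Φ U (unitCube d) := hbij.invOn_invFunOn
  have hmaps : Set.MapsTo ψ (unitCube d) U := hbij.surjOn.mapsTo_invFunOn
  have hψlip : LipschitzOnWith L' ψ (unitCube d) := by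
    apply LipschitzOnWith.of_dist_le_mul
    intro u hu v hv
    have h1 := hinv2 (ψ u) (hmaps hu) (ψ v) (hmaps hv)
    rwa [hinvOn.2 hu, hinvOn.2 hv] at h1
  -- Φ image of our set is inside cubeFace ∩ ball 0 (L'*t)
  have hΦS : Φ '' (ball y t ∩ frontier O) ⊆ cubeFace d ∩ ball 0 ((L':ℝ)*t) := by
    rintro _ ⟨w, hw, rfl⟩
    constructor
    · rw [← himg]; exact mem_image_of_mem Φ (hSU hw)
    · rw [mem_ball, ← hΦy]
      calc dist (Φ w) (Φ y) ≤ L' * dist w y := hlip.dist_le_mul _ (hSU hw).1 _ hyU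
        _ < L' * t := by
            apply mul_lt_mul_of_pos_left _ hL0
            exact mem_ball.1 hw.1
  have hSψ : ball y t ∩ frontier O ⊆ ψ '' (cubeFace d ∩ ball 0 ((L':ℝ)*t)) := by
    intro w hw
    exact ⟨Φ w, hΦS (mem_image_of_mem Φ hw), hinvOn.1 (hSU hw).1⟩
  calc μH[(d:ℝ)-1] (ball y t ∩ frontier O)
      ≤ μH[(d:ℝ)-1] (ψ '' (cubeFace d ∩ ball 0 ((L':ℝ)*t))) := measure_mono hSψ
    _ ≤ (L' : ℝ≥0∞)^((d:ℝ)-1) * μH[(d:ℝ)-1] (cubeFace d ∩ ball 0 ((L':ℝ)*t)) := by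
        apply LipschitzOnWith.hausdorffMeasure_image_le _ hd0
        exact hψlip.mono (fun u hu => cubeFace_subset_unitCube d hu.1)
    _ ≤ (L' : ℝ≥0∞)^((d:ℝ)-1) * ENNReal.ofReal ((Real.sqrt d * (2*((L':ℝ)*t))) ^ ((d:ℝ)-1)) := by
        apply mul_le_mul_right
        exact faceUpper d hd1 _ (by positivity)
    _ = ENNReal.ofReal ((2*Real.sqrt d*(L':ℝ)^2)^((d:ℝ)-1) * t^((d:ℝ)-1)) := by
        rw [show ((L':ℝ≥0) : ℝ≥0∞) = ENNReal.ofReal (L':ℝ) by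
          simp [ENNReal.ofReal_coe_nnreal]]
        rw [ENNReal.ofReal_rpow_of_pos hL0]
        rw [← ENNReal.ofReal_mul (by positivity)]
        congr 1
        rw [← Real.mul_rpow (le_of_lt hL0) (by positivity),
          ← Real.mul_rpow (by positivity) (le_of_lt ht)]
        congr 1
        ring


lemma chart_lower {d : ℕ} [NeZero d] (hd : 2 ≤ d) (O U : Set (EuclideanSpace ℝ (Fin d)))
    (Φ : EuclideanSpace ℝ (Fin d) → EuclideanSpace ℝ (Fin d))
    (y : EuclideanSpace ℝ (Fin d)) (L' : ℝ≥0) (hL : 1 ≤ L')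
    (hU : IsOpen U) (hyU : y ∈ U) (hΦy : Φ y = 0) (hbij : Set.BijOn Φ U (unitCube d))
    (hlip : LipschitzOnWith L' Φ U)
    (hinv2 : ∀ u ∈ U, ∀ v ∈ U, dist u v ≤ (L':ℝ) * dist (Φ u) (Φ v))
    (himg : Φ '' (U ∩ frontier O) = cubeFace d)
    (t : ℝ) (ht : 0 < t) (ht2 : t ≤ 1/(2*(L':ℝ))) :
    ENNReal.ofReal ((2/((L':ℝ)^2*Real.sqrt d))^((d:ℝ)-1) * t^((d:ℝ)-1)) ≤
      μH[(d:ℝ)-1] (ball y t ∩ frontier O) := by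
  have hd1 : 1 ≤ d := le_trans one_le_two hd
  have hd0 : (0:ℝ) ≤ (d:ℝ)-1 := by
    have : (1:ℝ) ≤ d := by exact_mod_cast hd1
    linarith
  have hL0 : (0:ℝ) < L' := lt_of_lt_of_le one_pos hL
  have hL1 : (1:ℝ) ≤ L' := by exact_mod_cast hL
  have hsd0 : (0:ℝ) < Real.sqrt d := Real.sqrt_pos.2 (by positivity)
  set ψ := Function.invFunOn Φ U with hψ
  have hinvOn : Set.InvOn ψ Φ U (unitCube d) := hbij.invOn_invFunOn
  have hmaps : Set.MapsTo ψ (unitCube d) U := hbij.surjOn.mapsTo_invFunOn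
  set s := t / (L':ℝ) with hs
  have hs0 : 0 < s := by positivity
  have hs1 : s ≤ 1 := by
    rw [hs, div_le_one hL0]
    calc t ≤ 1/(2*(L':ℝ)) := ht2
      _ ≤ L' := by
        rw [div_le_iff₀ (by positivity)]
        nlinarith
  set T := cubeFace d ∩ ball (0: EuclideanSpace ℝ (Fin d)) s with hT
  have hTcube : T ⊆ unitCube d := fun u hu => cubeFace_subset_unitCube d hu.1
  have hψT : ψ '' T ⊆ ball y t ∩ frontier O := by
    rintro _ ⟨u, hu, rfl⟩
    have huF : ψ u ∈ U ∩ frontier O := by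
      have := hu.1
      rw [← himg] at this
      obtain ⟨w, hw, rfl⟩ := this
      rwa [hinvOn.1 hw.1]
    constructor
    · rw [mem_ball]
      calc dist (ψ u) y ≤ L' * dist (Φ (ψ u)) (Φ y) := hinv2 _ huF.1 _ hyU
        _ = L' * dist u 0 := by rw [hinvOn.2 (hTcube hu), hΦy]
        _ < L' * s := mul_lt_mul_of_pos_left (mem_ball.1 hu.2) hL0
        _ = t := by rw [hs]; field_simp
    · exact huF.2
  have hTim : Φ '' (ψ '' T) = T := by
    rw [← Set.image_comp]
    apply Set.EqOn.image_eq_self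
    intro u hu
    exact hinvOn.2 (hTcube hu)
  have hkey : μH[(d:ℝ)-1] T ≤ (L' : ℝ≥0∞)^((d:ℝ)-1) * μH[(d:ℝ)-1] (ball y t ∩ frontier O) := by
    calc μH[(d:ℝ)-1] T = μH[(d:ℝ)-1] (Φ '' (ψ '' T)) := by rw [hTim]
      _ ≤ (L' : ℝ≥0∞)^((d:ℝ)-1) * μH[(d:ℝ)-1] (ψ '' T) := by
          apply LipschitzOnWith.hausdorffMeasure_image_le _ hd0
          apply hlip.mono
          rintro _ ⟨u, hu, rfl⟩
          exact hmaps (hTcube hu)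
      _ ≤ _ := mul_le_mul_right (measure_mono hψT) _
  have hface := faceLower d hd s hs0 hs1
  have hcoe : ((L':ℝ≥0) : ℝ≥0∞)^((d:ℝ)-1) = ENNReal.ofReal ((L':ℝ)^((d:ℝ)-1)) := by
    rw [show ((L':ℝ≥0) : ℝ≥0∞) = ENNReal.ofReal (L':ℝ) by simp [ENNReal.ofReal_coe_nnreal]]
    rw [ENNReal.ofReal_rpow_of_pos hL0]
  have hne0 : ((L':ℝ≥0) : ℝ≥0∞)^((d:ℝ)-1) ≠ 0 := by
    rw [hcoe]
    simp only [ne_eq, ENNReal.ofReal_eq_zero, not_le]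
    positivity
  have hnetop : ((L':ℝ≥0) : ℝ≥0∞)^((d:ℝ)-1) ≠ ⊤ := by
    rw [hcoe]; exact ENNReal.ofReal_ne_top
  rw [← ENNReal.mul_le_mul_iff_right hne0 hnetop]
  calc ((L':ℝ≥0) : ℝ≥0∞)^((d:ℝ)-1) *
        ENNReal.ofReal ((2/((L':ℝ)^2*Real.sqrt d))^((d:ℝ)-1) * t^((d:ℝ)-1))
      = ENNReal.ofReal ((2*s/Real.sqrt d) ^ ((d:ℝ)-1)) := by
        rw [hcoe, ← ENNReal.ofReal_mul (by positivity)]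
        rw [← mul_assoc, ← Real.mul_rpow (by positivity) (by positivity),
          ← Real.mul_rpow (by positivity) (le_of_lt ht)]
        have h1 : (L':ℝ) ≠ 0 := ne_of_gt hL0
        have h2 : Real.sqrt d ≠ 0 := ne_of_gt hsd0
        have hbase : (L':ℝ) * (2/((L':ℝ)^2*Real.sqrt d)) * t = 2*s/Real.sqrt d := by
          rw [hs]
          field_simp
        rw [hbase]
    _ ≤ μH[(d:ℝ)-1] T := hface
    _ ≤ ((L':ℝ≥0) : ℝ≥0∞)^((d:ℝ)-1) * μH[(d:ℝ)-1] (ball y t ∩ frontier O) := hkey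


lemma upreg_extend {d : ℕ} (hd : 2 ≤ d) (S : Set (EuclideanSpace ℝ (Fin d))) (c ρ : ℝ)
    (hc : 0 < c) (hρ : 0 < ρ) (hρ1 : ρ ≤ 1)
    (h : ∀ y ∈ S, ∀ t : ℝ, 0 < t → t ≤ ρ →
      μH[(d:ℝ)-1] (ball y t ∩ S) ≤ ENNReal.ofReal (c * t^((d:ℝ)-1))) :
    ∃ c' : ℝ, 0 < c' ∧ ∀ x, ∀ r : ℝ, 0 < r → r ≤ 1 →
      μH[(d:ℝ)-1] (ball x r ∩ S) ≤ ENNReal.ofReal (c' * r^((d:ℝ)-1)) := by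
  have hd0 : (0:ℝ) ≤ (d:ℝ)-1 := by
    have : (2:ℝ) ≤ d := by exact_mod_cast hd
    linarith
  obtain ⟨Q, hQsub, hQfin, hQcov⟩ :=
    (isCompact_closedBall (0:EuclideanSpace ℝ (Fin d)) 1).finite_cover_balls
      (half_pos hρ)
  set QF := hQfin.toFinset with hQF
  set N : ℕ := QF.card with hN
  refine ⟨max (c * 2^((d:ℝ)-1)) (N * c * (2/ρ)^((d:ℝ)-1)) + 1, by positivity, ?_⟩
  intro x r hr hr1
  set c' := max (c * 2^((d:ℝ)-1)) (N * c * (2/ρ)^((d:ℝ)-1)) + 1 with hc'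
  have hrpow : (0:ℝ) ≤ r^((d:ℝ)-1) := Real.rpow_nonneg hr.le _
  rcases le_or_gt (2*r) ρ with hcase | hcase
  · -- small radius case
    rcases Set.eq_empty_or_nonempty (ball x r ∩ S) with he | ⟨w, hw⟩
    · rw [he, measure_empty]
      exact zero_le
    · have hwS : w ∈ S := hw.2
      have hsub : ball x r ∩ S ⊆ ball w (2*r) ∩ S := by
        rintro z ⟨hz, hzS⟩
        refine ⟨mem_ball.2 ?_, hzS⟩
        have h1 : dist z x < r := mem_ball.1 hz
        have h2 : dist w x < r := mem_ball.1 hw.1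
        calc dist z w ≤ dist z x + dist x w := dist_triangle _ _ _
          _ < r + r := by rw [dist_comm x w]; linarith
          _ = 2*r := by ring
      calc μH[(d:ℝ)-1] (ball x r ∩ S) ≤ μH[(d:ℝ)-1] (ball w (2*r) ∩ S) := measure_mono hsub
        _ ≤ ENNReal.ofReal (c * (2*r)^((d:ℝ)-1)) := h w hwS _ (by linarith) hcase
        _ ≤ ENNReal.ofReal (c' * r^((d:ℝ)-1)) := by
            apply ENNReal.ofReal_le_ofReal
            rw [Real.mul_rpow (by norm_num) hr.le, ← mul_assoc]
            apply mul_le_mul_of_nonneg_right _ hrpow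
            calc c * 2^((d:ℝ)-1) ≤ max (c * 2^((d:ℝ)-1)) (N * c * (2/ρ)^((d:ℝ)-1)) :=
                  le_max_left _ _
              _ ≤ c' := by rw [hc']; linarith
  · -- large radius case, finite cover
    have hcov : ball x r ∩ S ⊆ ⋃ q ∈ QF, (ball (x+q) (ρ/2) ∩ S) := by
      rintro z ⟨hz, hzS⟩
      have h1 : z - x ∈ closedBall (0:EuclideanSpace ℝ (Fin d)) 1 := by
        rw [mem_closedBall, dist_zero_right]
        calc ‖z - x‖ = dist z x := (dist_eq_norm z x).symm
          _ ≤ 1 := le_of_lt (lt_of_lt_of_le (mem_ball.1 hz) hr1)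
      obtain ⟨q, hq, hq2⟩ := Set.mem_iUnion₂.1 (hQcov h1)
      refine Set.mem_iUnion₂.2 ⟨q, hQfin.mem_toFinset.2 hq, ?_, hzS⟩
      rw [mem_ball] at hq2 ⊢
      rw [show dist z (x+q) = dist (z-x) q by rw [dist_eq_norm, dist_eq_norm]; congr 1; abel]
      exact hq2
    have hterm : ∀ q ∈ QF, μH[(d:ℝ)-1] (ball (x+q) (ρ/2) ∩ S) ≤
        ENNReal.ofReal (c * ρ^((d:ℝ)-1)) := by
      intro q _
      rcases Set.eq_empty_or_nonempty (ball (x+q) (ρ/2) ∩ S) with he | ⟨y, hy⟩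
      · rw [he, measure_empty]; exact zero_le
      · have hsub2 : ball (x+q) (ρ/2) ∩ S ⊆ ball y ρ ∩ S := by
          rintro z ⟨hz, hzS⟩
          refine ⟨mem_ball.2 ?_, hzS⟩
          have h1 : dist z (x+q) < ρ/2 := mem_ball.1 hz
          have h2 : dist y (x+q) < ρ/2 := mem_ball.1 hy.1
          calc dist z y ≤ dist z (x+q) + dist (x+q) y := dist_triangle _ _ _
            _ < ρ/2 + ρ/2 := by rw [dist_comm (x+q) y]; linarith
            _ = ρ := by ring
        exact (measure_mono hsub2).trans (h y hy.2 ρ hρ le_rfl)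
    calc μH[(d:ℝ)-1] (ball x r ∩ S) ≤ ∑ q ∈ QF, μH[(d:ℝ)-1] (ball (x+q) (ρ/2) ∩ S) :=
          (measure_mono hcov).trans (measure_biUnion_finset_le _ _)
      _ ≤ ∑ _q ∈ QF, ENNReal.ofReal (c * ρ^((d:ℝ)-1)) := Finset.sum_le_sum hterm
      _ = N * ENNReal.ofReal (c * ρ^((d:ℝ)-1)) := by
          rw [Finset.sum_const, nsmul_eq_mul]
      _ ≤ ENNReal.ofReal (c' * r^((d:ℝ)-1)) := by
          rw [show (N : ℝ≥0∞) = ENNReal.ofReal (N:ℝ) by simp,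
            ← ENNReal.ofReal_mul (by positivity)]
          apply ENNReal.ofReal_le_ofReal
          have hρr : ρ/2 ≤ r := by linarith
          have key : (N:ℝ) * c * ρ^((d:ℝ)-1) ≤ (N * c * (2/ρ)^((d:ℝ)-1)) * r^((d:ℝ)-1) := by
            have h1 : ρ^((d:ℝ)-1) ≤ 1 := Real.rpow_le_one hρ.le hρ1 hd0
            have h2 : (ρ/2)^((d:ℝ)-1) ≤ r^((d:ℝ)-1) :=
              Real.rpow_le_rpow (by positivity) hρr hd0
            have h3 : (2/ρ)^((d:ℝ)-1) * (ρ/2)^((d:ℝ)-1) = 1 := by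
              rw [← Real.mul_rpow (by positivity) (by positivity)]
              rw [show (2/ρ) * (ρ/2) = 1 by field_simp]
              exact Real.one_rpow _
            calc (N:ℝ) * c * ρ^((d:ℝ)-1) ≤ (N:ℝ) * c * 1 := by
                  apply mul_le_mul_of_nonneg_left h1 (by positivity)
              _ = (N * c * (2/ρ)^((d:ℝ)-1)) * (ρ/2)^((d:ℝ)-1) := by
                  rw [mul_assoc ((N:ℝ) * c), h3]
              _ ≤ (N * c * (2/ρ)^((d:ℝ)-1)) * r^((d:ℝ)-1) := by
                  apply mul_le_mul_of_nonneg_left h2 (by positivity)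
          calc (N:ℝ) * (c * ρ^((d:ℝ)-1)) = (N:ℝ) * c * ρ^((d:ℝ)-1) := by ring
            _ ≤ (N * c * (2/ρ)^((d:ℝ)-1)) * r^((d:ℝ)-1) := key
            _ ≤ c' * r^((d:ℝ)-1) := by
                apply mul_le_mul_of_nonneg_right _ hrpow
                calc (N:ℝ) * c * (2/ρ)^((d:ℝ)-1) ≤
                      max (c * 2^((d:ℝ)-1)) (N * c * (2/ρ)^((d:ℝ)-1)) := le_max_right _ _
                  _ ≤ c' := by rw [hc']; linarith

end

end Auxiliary

/-- If `D ⊆ ∂O` is `(d-1)`-regular and `O` satisfies a uniform Lipschitz condition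
around `cl(∂O \ D)`, then the full boundary `∂O` is `(d-1)`-regular. -/
theorem full_boundary_regular (d : ℕ) [NeZero d] (hd : 2 ≤ d)
    (O : Set (EuclideanSpace ℝ (Fin d))) (hO : IsOpen O)
    (D : Set (EuclideanSpace ℝ (Fin d))) (hDO : D ⊆ frontier O)
    (a b : ℝ) (ha : 0 < a) (hab : a ≤ b)
    (hDreg : ∀ x ∈ D, ∀ r : ℝ, 0 < r → r ≤ 1 →
      ENNReal.ofReal (a * r ^ ((d : ℝ) - 1)) ≤ μH[(d : ℝ) - 1] (ball x r ∩ D) ∧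
      μH[(d : ℝ) - 1] (ball x r ∩ D) ≤ ENNReal.ofReal (b * r ^ ((d : ℝ) - 1)))
    (L : NNReal)
    (hLip : ∀ x ∈ closure (frontier O \ D),
      ∃ U : Set (EuclideanSpace ℝ (Fin d)),
      ∃ Φ : EuclideanSpace ℝ (Fin d) → EuclideanSpace ℝ (Fin d),
        IsOpen U ∧ x ∈ U ∧ Φ x = 0 ∧ Set.BijOn Φ U (unitCube d) ∧
        LipschitzOnWith L Φ U ∧
        (∀ y ∈ U, ∀ z ∈ U, dist y z ≤ (L : ℝ) * dist (Φ y) (Φ z)) ∧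
        Φ '' (U ∩ O) = lowerHalfCube d ∧
        Φ '' (U ∩ frontier O) = cubeFace d) :
    ∃ a' b' : ℝ, 0 < a' ∧ a' ≤ b' ∧
      ∀ x ∈ frontier O, ∀ r : ℝ, 0 < r → r ≤ 1 →
        ENNReal.ofReal (a' * r ^ ((d : ℝ) - 1)) ≤ μH[(d : ℝ) - 1] (ball x r ∩ frontier O) ∧
        μH[(d : ℝ) - 1] (ball x r ∩ frontier O) ≤ ENNReal.ofReal (b' * r ^ ((d : ℝ) - 1)) := by
  have hd0 : (0:ℝ) ≤ (d:ℝ)-1 := by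
    have : (2:ℝ) ≤ d := by exact_mod_cast hd
    linarith
  set F := closure (frontier O \ D) with hF
  have hFsub : F ⊆ frontier O := closure_minimal Set.diff_subset isClosed_frontier
  have hcover : frontier O ⊆ D ∪ F := by
    intro x hx
    by_cases hxD : x ∈ D
    · exact Or.inl hxD
    · exact Or.inr (subset_closure ⟨hx, hxD⟩)
  set L' : ℝ≥0 := max L 1 with hL'
  have hL1 : 1 ≤ L' := le_max_right _ _
  have hL0 : (0:ℝ) < L' := lt_of_lt_of_le one_pos (by exact_mod_cast hL1)
  have hLle : (L:ℝ) ≤ L' := by exact_mod_cast le_max_left L 1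
  set δ : ℝ := 1/(2*(L':ℝ)) with hδ
  have hδ0 : 0 < δ := by positivity
  have hδ1 : δ ≤ 1 := by
    rw [hδ, div_le_one (by positivity)]
    have : (1:ℝ) ≤ L' := by exact_mod_cast hL1
    linarith
  have hsd0 : (0:ℝ) < Real.sqrt d := Real.sqrt_pos.2 (by positivity)
  set Cu : ℝ := (2*Real.sqrt d*(L':ℝ)^2)^((d:ℝ)-1) with hCu
  set Cl : ℝ := (2/((L':ℝ)^2*Real.sqrt d))^((d:ℝ)-1) with hCl
  have hCu0 : 0 < Cu := Real.rpow_pos_of_pos (by positivity) _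
  have hCl0 : 0 < Cl := Real.rpow_pos_of_pos (by positivity) _
  -- charts with constant L'
  have hchart : ∀ y ∈ F,
      (∀ t : ℝ, 0 < t → t ≤ δ →
        μH[(d:ℝ)-1] (ball y t ∩ frontier O) ≤ ENNReal.ofReal (Cu * t^((d:ℝ)-1))) ∧
      (∀ t : ℝ, 0 < t → t ≤ δ →
        ENNReal.ofReal (Cl * t^((d:ℝ)-1)) ≤ μH[(d:ℝ)-1] (ball y t ∩ frontier O)) := by
    intro y hy
    obtain ⟨U, Φ, hU, hyU, hΦy, hbij, hlip, hinv2, -, himg⟩ := hLip y hy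
    have hlip' : LipschitzOnWith L' Φ U := fun u hu v hv =>
      le_trans (hlip hu hv) (mul_le_mul_left (ENNReal.coe_le_coe.2 (le_max_left L 1)) _)
    have hinv2' : ∀ u ∈ U, ∀ v ∈ U, dist u v ≤ (L':ℝ) * dist (Φ u) (Φ v) := by
      intro u hu v hv
      calc dist u v ≤ (L:ℝ) * dist (Φ u) (Φ v) := hinv2 u hu v hv
        _ ≤ (L':ℝ) * dist (Φ u) (Φ v) := mul_le_mul_of_nonneg_right hLle dist_nonneg
    constructor
    · intro t ht ht2
      exact chart_upper hd O U Φ y L' hL1 hU hyU hΦy hbij hlip' hinv2' himg t ht ht2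
    · intro t ht ht2
      exact chart_lower hd O U Φ y L' hL1 hU hyU hΦy hbij hlip' hinv2' himg t ht ht2
  -- uniform upper bound for F part
  obtain ⟨cF, hcF0, hcF⟩ := upreg_extend hd F Cu δ hCu0 hδ0 hδ1 (by
    intro y hy t ht ht2
    calc μH[(d:ℝ)-1] (ball y t ∩ F) ≤ μH[(d:ℝ)-1] (ball y t ∩ frontier O) :=
          measure_mono (Set.inter_subset_inter_right _ hFsub)
      _ ≤ _ := (hchart y hy).1 t ht ht2)
  -- uniform upper bound for D part
  obtain ⟨cD, hcD0, hcD⟩ := upreg_extend hd D b 1 (lt_of_lt_of_le ha hab) one_pos le_rfl (by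
    intro y hy t ht ht2
    exact (hDreg y hy t ht ht2).2)
  refine ⟨min a (min Cl (Cl * δ^((d:ℝ)-1))), max (cD + cF) (min a (min Cl (Cl * δ^((d:ℝ)-1)))),
    ?_, le_max_right _ _, ?_⟩
  · have : 0 < Cl * δ^((d:ℝ)-1) := by positivity
    positivity
  intro x hx r hr hr1
  set a' := min a (min Cl (Cl * δ^((d:ℝ)-1))) with ha'
  set b' := max (cD + cF) a' with hb'
  have hrpow : (0:ℝ) ≤ r^((d:ℝ)-1) := Real.rpow_nonneg hr.le _
  constructor
  · -- lower bound
    rcases hcover hx with hxD | hxF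
    · calc ENNReal.ofReal (a' * r^((d:ℝ)-1)) ≤ ENNReal.ofReal (a * r^((d:ℝ)-1)) := by
            apply ENNReal.ofReal_le_ofReal
            exact mul_le_mul_of_nonneg_right (min_le_left _ _) hrpow
        _ ≤ μH[(d:ℝ)-1] (ball x r ∩ D) := (hDreg x hxD r hr hr1).1
        _ ≤ μH[(d:ℝ)-1] (ball x r ∩ frontier O) :=
            measure_mono (Set.inter_subset_inter_right _ hDO)
    · rcases le_or_gt r δ with hcase | hcase
      · calc ENNReal.ofReal (a' * r^((d:ℝ)-1)) ≤ ENNReal.ofReal (Cl * r^((d:ℝ)-1)) := by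
              apply ENNReal.ofReal_le_ofReal
              apply mul_le_mul_of_nonneg_right _ hrpow
              exact le_trans (min_le_right _ _) (min_le_left _ _)
          _ ≤ _ := (hchart x hxF).2 r hr hcase
      · calc ENNReal.ofReal (a' * r^((d:ℝ)-1)) ≤ ENNReal.ofReal (Cl * δ^((d:ℝ)-1)) := by
              apply ENNReal.ofReal_le_ofReal
              calc a' * r^((d:ℝ)-1) ≤ (Cl * δ^((d:ℝ)-1)) * r^((d:ℝ)-1) := by
                    apply mul_le_mul_of_nonneg_right _ hrpow
                    exact le_trans (min_le_right _ _) (min_le_right _ _)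
                _ ≤ (Cl * δ^((d:ℝ)-1)) * 1 := by
                    apply mul_le_mul_of_nonneg_left _ (by positivity)
                    exact Real.rpow_le_one hr.le hr1 hd0
                _ = Cl * δ^((d:ℝ)-1) := mul_one _
          _ ≤ μH[(d:ℝ)-1] (ball x δ ∩ frontier O) := (hchart x hxF).2 δ hδ0 le_rfl
          _ ≤ μH[(d:ℝ)-1] (ball x r ∩ frontier O) := by
              apply measure_mono
              exact Set.inter_subset_inter_left _ (ball_subset_ball hcase.le)
  · -- upper bound
    calc μH[(d:ℝ)-1] (ball x r ∩ frontier O)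
        ≤ μH[(d:ℝ)-1] ((ball x r ∩ D) ∪ (ball x r ∩ F)) := by
          apply measure_mono
          rintro z ⟨hz1, hz2⟩
          rcases hcover hz2 with h | h
          · exact Or.inl ⟨hz1, h⟩
          · exact Or.inr ⟨hz1, h⟩
      _ ≤ μH[(d:ℝ)-1] (ball x r ∩ D) + μH[(d:ℝ)-1] (ball x r ∩ F) := measure_union_le _ _
      _ ≤ ENNReal.ofReal (cD * r^((d:ℝ)-1)) + ENNReal.ofReal (cF * r^((d:ℝ)-1)) :=
          add_le_add (hcD x r hr hr1) (hcF x r hr hr1)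
      _ = ENNReal.ofReal ((cD + cF) * r^((d:ℝ)-1)) := by
          rw [← ENNReal.ofReal_add (by positivity) (by positivity)]
          congr 1
          ring
      _ ≤ ENNReal.ofReal (b' * r^((d:ℝ)-1)) := by
          apply ENNReal.ofReal_le_ofReal
          exact mul_le_mul_of_nonneg_right (le_max_left _ _) hrpow
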